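/- Suppose estimators F̂_B of the CDF F(·;θ₀) of λ(X;θ₀) satisfy sup_t |F̂_B(t;θ₀) - F(t;θ₀)| → 0 almost surely as B → ∞, and F(·;θ₀) is continuous. Let ĥ_B(X) = F̂_B(λ(X;θ₀);θ₀) and h(X) = F(λ(X;θ₀);θ₀). Then ĥ_B(X) → h(X) almost surely, and P(ĥ_B(X) ≤ α) → P(h(X) ≤ α) = α for every α ∈ (0,1). -/

import Mathlib

open MeasureTheory Set Filter Topology
lemma key_pit {Ω : Type*} [MeasurableSpace Ω]
    (μ : Measure Ω) [IsProbabilityMeasure μ]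
    (lam : Ω → ℝ) (hlam : Measurable lam)
    (F : ℝ → ℝ) (hFdef : ∀ t, F t = (μ {ω | lam ω ≤ t}).toReal) (hFcont : Continuous F)
    {β : ℝ} (hβ : β ∈ Set.Ioo (0 : ℝ) 1) :
    (μ {ω | F (lam ω) ≤ β}).toReal = β := by
  obtain ⟨hβ0, hβ1⟩ := hβ
  have hFmono : Monotone F := by
    intro s t hst
    rw [hFdef s, hFdef t]
    exact ENNReal.toReal_mono (measure_ne_top μ _)
      (measure_mono fun ω hω => le_trans hω hst)
  -- lower tail: ∃ t, F t ≤ β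
  have hbot : ∃ t : ℝ, F t ≤ β := by
    have hanti : Antitone (fun n : ℕ => {ω | lam ω ≤ -(n : ℝ)}) := by
      intro n m hnm ω hω
      have hc : (n : ℝ) ≤ m := Nat.cast_le.mpr hnm
      simp only [mem_setOf_eq] at hω ⊢
      linarith
    have hempty : (⋂ n : ℕ, {ω | lam ω ≤ -(n : ℝ)}) = (∅ : Set Ω) := by
      ext ω
      simp only [mem_iInter, mem_setOf_eq, mem_empty_iff_false, iff_false, not_forall]
      obtain ⟨n, hn⟩ := exists_nat_gt (-(lam ω))
      exact ⟨n, by linarith⟩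
    have htend := tendsto_measure_iInter_atTop
      (μ := μ) (s := fun n : ℕ => {ω | lam ω ≤ -(n : ℝ)})
      (fun n => ((measurableSet_le hlam measurable_const)).nullMeasurableSet)
      hanti ⟨0, measure_ne_top μ _⟩
    rw [hempty, measure_empty] at htend
    have htendR : Tendsto (fun n : ℕ => F (-(n : ℝ))) atTop (𝓝 0) := by
      have := (ENNReal.tendsto_toReal (by simp)).comp htend
      simpa [hFdef, Function.comp_def] using this
    obtain ⟨n, hn⟩ := (htendR.eventually_lt_const hβ0).exists
    exact ⟨-(n : ℝ), hn.le⟩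
  -- upper tail: ∃ T, β < F T
  have htop : ∃ T : ℝ, β < F T := by
    have hmonoU : Monotone (fun n : ℕ => {ω | lam ω ≤ (n : ℝ)}) := by
      intro n m hnm ω hω
      have : (n : ℝ) ≤ m := Nat.cast_le.mpr hnm
      exact le_trans hω this
    have huniv : (⋃ n : ℕ, {ω | lam ω ≤ (n : ℝ)}) = (univ : Set Ω) := by
      ext ω
      simp only [mem_iUnion, mem_setOf_eq, mem_univ, iff_true]
      obtain ⟨n, hn⟩ := exists_nat_gt (lam ω)
      exact ⟨n, hn.le⟩
    have htend := tendsto_measure_iUnion_atTop (μ := μ) hmonoU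
    rw [huniv] at htend
    have htendR : Tendsto (fun n : ℕ => F (n : ℝ)) atTop (𝓝 1) := by
      have := (ENNReal.tendsto_toReal (by simp)).comp htend
      simpa [hFdef, Function.comp_def, measure_univ] using this
    obtain ⟨n, hn⟩ := (htendR.eventually_const_lt hβ1).exists
    exact ⟨(n : ℝ), hn⟩
  obtain ⟨T, hT⟩ := htop
  set S : Set ℝ := {t | F t ≤ β} with hS
  have hSne : S.Nonempty := hbot
  have hSbdd : BddAbove S := by
    refine ⟨T, fun s hs => ?_⟩
    by_contra h
    push_neg at h
    exact absurd (le_trans (hFmono h.le) hs) (not_le.mpr hT)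
  have hSclosed : IsClosed S := isClosed_le hFcont continuous_const
  set t0 : ℝ := sSup S with ht0
  have ht0mem : t0 ∈ S := hSclosed.csSup_mem hSne hSbdd
  have hFt0 : F t0 = β := by
    refine le_antisymm ht0mem ?_
    by_contra h
    push_neg at h
    have : ∀ᶠ t in 𝓝 t0, F t < β := hFcont.continuousAt.eventually_lt_const h
    obtain ⟨δ, hδ, hball⟩ := Metric.eventually_nhds_iff.mp this
    have hmem : t0 + δ / 2 ∈ S := by
      show F (t0 + δ / 2) ≤ β
      refine (hball ?_).le
      rw [Real.dist_eq]
      rw [abs_of_nonneg (by linarith)]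
      linarith
    linarith [le_csSup hSbdd hmem]
  have hset : {ω | F (lam ω) ≤ β} = {ω | lam ω ≤ t0} := by
    ext ω
    constructor
    · intro h
      exact le_csSup hSbdd h
    · intro h
      calc F (lam ω) ≤ F t0 := hFmono h
        _ = β := hFt0
  rw [hset, ← hFdef, hFt0]

lemma key_boundary {Ω : Type*} [MeasurableSpace Ω]
    (μ : Measure Ω) [IsProbabilityMeasure μ]
    (lam : Ω → ℝ) (hlam : Measurable lam)
    (F : ℝ → ℝ) (hFdef : ∀ t, F t = (μ {ω | lam ω ≤ t}).toReal) (hFcont : Continuous F)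
    {α : ℝ} (hα : α ∈ Set.Ioo (0 : ℝ) 1) :
    μ {ω | F (lam ω) = α} = 0 := by
  obtain ⟨hα0, hα1⟩ := hα
  have hmeasF : Measurable fun ω => F (lam ω) := hFcont.measurable.comp hlam
  have hsmall : ∀ ε : ℝ, 0 < ε → ε < α → (μ {ω | F (lam ω) = α}).toReal ≤ ε := by
    intro ε hε hεα
    have h1 : (μ {ω | F (lam ω) ≤ α - ε}).toReal = α - ε :=
      key_pit μ lam hlam F hFdef hFcont ⟨by linarith, by linarith⟩
    have h2 : (μ {ω | F (lam ω) ≤ α}).toReal = α :=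
      key_pit μ lam hlam F hFdef hFcont ⟨hα0, hα1⟩
    have hd : Disjoint {ω | F (lam ω) = α} {ω | F (lam ω) ≤ α - ε} := by
      rw [Set.disjoint_left]
      intro ω h1' h2'
      simp only [mem_setOf_eq] at h1' h2'
      linarith
    have hu : μ ({ω | F (lam ω) = α} ∪ {ω | F (lam ω) ≤ α - ε})
        = μ {ω | F (lam ω) = α} + μ {ω | F (lam ω) ≤ α - ε} :=
      measure_union hd (measurableSet_le hmeasF measurable_const)
    have hsub : ({ω | F (lam ω) = α} ∪ {ω | F (lam ω) ≤ α - ε}) ⊆ {ω | F (lam ω) ≤ α} := by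
      rintro ω (h | h) <;> simp only [mem_setOf_eq] at * <;> linarith
    have hle := measure_mono (μ := μ) hsub
    rw [hu] at hle
    have hleR : (μ {ω | F (lam ω) = α}).toReal + (μ {ω | F (lam ω) ≤ α - ε}).toReal
        ≤ (μ {ω | F (lam ω) ≤ α}).toReal := by
      rw [← ENNReal.toReal_add (measure_ne_top μ _) (measure_ne_top μ _)]
      exact ENNReal.toReal_mono (measure_ne_top μ _) hle
    rw [h1, h2] at hleR
    linarith
  have hzero : (μ {ω | F (lam ω) = α}).toReal = 0 := by
    by_contra h
    have hpos : 0 < (μ {ω | F (lam ω) = α}).toReal :=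
      lt_of_le_of_ne ENNReal.toReal_nonneg (Ne.symm h)
    set ε := min ((μ {ω | F (lam ω) = α}).toReal / 2) (α / 2) with hε
    have h1 : 0 < ε := lt_min (by linarith) (by linarith)
    have h2 : ε < α := lt_of_le_of_lt (min_le_right _ _) (by linarith)
    have := hsmall ε h1 h2
    have : ε ≤ (μ {ω | F (lam ω) = α}).toReal / 2 := min_le_left _ _
    linarith [hsmall ε h1 h2]
  exact (ENNReal.toReal_eq_zero_iff _).mp hzero |>.resolve_right (measure_ne_top μ _)

theorem stmt_11 {Ω Ω' : Type*} [MeasurableSpace Ω] [MeasurableSpace Ω']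
    (μ : Measure Ω) [IsProbabilityMeasure μ] (μ' : Measure Ω') [IsProbabilityMeasure μ']
    (lam : Ω → ℝ) (hlam : Measurable lam)
    (F : ℝ → ℝ) (hFdef : ∀ t, F t = (μ {ω | lam ω ≤ t}).toReal) (hFcont : Continuous F)
    (Fhat : ℕ → Ω' → ℝ → ℝ)
    (hFhatmeas : ∀ B, Measurable fun p : Ω' × ℝ => Fhat B p.1 p.2)
    (hunif : ∀ᵐ ω' ∂μ', ∀ ε > (0 : ℝ), ∃ N, ∀ B ≥ N, ∀ t, |Fhat B ω' t - F t| ≤ ε) :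
    (∀ᵐ q ∂(μ'.prod μ),
        Tendsto (fun B => Fhat B q.1 (lam q.2)) atTop (nhds (F (lam q.2)))) ∧
    ∀ α ∈ Set.Ioo (0 : ℝ) 1,
      (μ {ω | F (lam ω) ≤ α}).toReal = α ∧
      Tendsto (fun B => ((μ'.prod μ) {q | Fhat B q.1 (lam q.2) ≤ α}).toReal)
        atTop (nhds ((μ {ω | F (lam ω) ≤ α}).toReal)) := by
  -- Part 1: a.s. convergence on the product space
  have hone : ∀ᵐ q ∂(μ'.prod μ),
      Tendsto (fun B => Fhat B q.1 (lam q.2)) atTop (nhds (F (lam q.2))) := by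
    rw [ae_iff]
    set Bad : Set Ω' := {ω' | ¬ ∀ ε > (0 : ℝ), ∃ N, ∀ B ≥ N, ∀ t, |Fhat B ω' t - F t| ≤ ε}
      with hBad
    have hBad0 : μ' Bad = 0 := by
      rw [ae_iff] at hunif; exact hunif
    refine measure_mono_null (t := Bad ×ˢ (univ : Set Ω)) (fun q hq => ?_)
      (by rw [Measure.prod_prod, hBad0, zero_mul])
    simp only [mem_setOf_eq] at hq
    constructor
    · -- q.1 ∈ Bad
      intro hgood
      apply hq
      rw [Metric.tendsto_atTop]
      intro ε hε
      obtain ⟨N, hN⟩ := hgood (ε / 2) (by linarith)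
      refine ⟨N, fun B hB => ?_⟩
      have := hN B hB (lam q.2)
      rw [Real.dist_eq]
      linarith
    · exact mem_univ _
  refine ⟨hone, fun α hα => ?_⟩
  have hpit := key_pit μ lam hlam F hFdef hFcont hα
  refine ⟨hpit, ?_⟩
  -- setup for dominated convergence
  have hmeasB : ∀ B, Measurable fun q : Ω' × Ω => Fhat B q.1 (lam q.2) := fun B =>
    (hFhatmeas B).comp (measurable_fst.prodMk (hlam.comp measurable_snd))
  have hmeasH : Measurable fun q : Ω' × Ω => F (lam q.2) :=
    (hFcont.measurable.comp hlam).comp measurable_snd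
  have hSB : ∀ B, MeasurableSet {q : Ω' × Ω | Fhat B q.1 (lam q.2) ≤ α} := fun B =>
    measurableSet_le (hmeasB B) measurable_const
  have hSH : MeasurableSet {q : Ω' × Ω | F (lam q.2) ≤ α} :=
    measurableSet_le hmeasH measurable_const
  have hboundary : (μ'.prod μ) {q : Ω' × Ω | F (lam q.2) = α} = 0 := by
    have : {q : Ω' × Ω | F (lam q.2) = α} = (univ : Set Ω') ×ˢ {ω | F (lam ω) = α} := by
      ext q; simp [Set.mem_prod]
    rw [this, Measure.prod_prod, key_boundary μ lam hlam F hFdef hFcont hα, mul_zero]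
  have hboundaryAe : ∀ᵐ q ∂(μ'.prod μ), F (lam q.2) ≠ α := by
    rw [ae_iff]
    simpa using hboundary
  -- rewrite both sides as integrals of indicators
  have heqB : ∀ B, ((μ'.prod μ) {q | Fhat B q.1 (lam q.2) ≤ α}).toReal
      = ∫ q, ({q : Ω' × Ω | Fhat B q.1 (lam q.2) ≤ α}).indicator 1 q ∂(μ'.prod μ) :=
    fun B => (integral_indicator_one (hSB B)).symm
  have heqH : ((μ'.prod μ) {q | F (lam q.2) ≤ α}).toReal
      = ∫ q, ({q : Ω' × Ω | F (lam q.2) ≤ α}).indicator 1 q ∂(μ'.prod μ) :=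
    (integral_indicator_one hSH).symm
  have hmuH : ((μ'.prod μ) {q | F (lam q.2) ≤ α}).toReal = (μ {ω | F (lam ω) ≤ α}).toReal := by
    have : {q : Ω' × Ω | F (lam q.2) ≤ α} = (univ : Set Ω') ×ˢ {ω | F (lam ω) ≤ α} := by
      ext q; simp [Set.mem_prod]
    rw [this, Measure.prod_prod, measure_univ, one_mul]
  rw [← hmuH, heqH]
  simp only [heqB]
  apply tendsto_integral_of_dominated_convergence (fun _ => (1 : ℝ))
  · exact fun B => ((measurable_one.indicator (hSB B))).aestronglyMeasurable
  · exact integrable_const 1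
  · intro B
    filter_upwards with q
    by_cases hq : q ∈ {q : Ω' × Ω | Fhat B q.1 (lam q.2) ≤ α} <;>
      simp [Set.indicator_of_mem, Set.indicator_of_notMem, hq]
  · filter_upwards [hone, hboundaryAe] with q hq hne
    rcases lt_or_gt_of_ne hne with hlt | hgt
    · have hev : ∀ᶠ B in atTop, Fhat B q.1 (lam q.2) < α := hq.eventually_lt_const hlt
      have hmem : q ∈ {q : Ω' × Ω | F (lam q.2) ≤ α} := hlt.le
      rw [Set.indicator_of_mem hmem]
      refine Tendsto.congr' ?_ tendsto_const_nhds
      filter_upwards [hev] with B hB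
      exact (Set.indicator_of_mem (hB.le : q ∈ _) _).symm
    · have hev : ∀ᶠ B in atTop, α < Fhat B q.1 (lam q.2) := hq.eventually_const_lt hgt
      have hmem : q ∉ {q : Ω' × Ω | F (lam q.2) ≤ α} := by
        simp only [mem_setOf_eq, not_le]; exact hgt
      rw [Set.indicator_of_notMem hmem]
      refine Tendsto.congr' ?_ tendsto_const_nhds
      filter_upwards [hev] with B hB
      exact (Set.indicator_of_notMem (by simp only [mem_setOf_eq, not_le]; exact hB) _).symm
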